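/- Let f : [0,1] → [0,1] be continuous with zero topological entropy, and let ⟨u,v⟩ with u < v be an f-nonseparable pair. Then u > 0 and v < 1, i.e. neither u nor v is an endpoint of the interval. -/

import Mathlib

open Filter Topology

/-- The unit interval `[0,1]` as a subtype of `ℝ`. -/
abbrev UI := Set.Icc (0 : ℝ) 1

/-- The ω-limit set of a point `x` under `f`: the set of limit points of the orbit. -/
def omegaSet (f : UI → UI) (x : UI) : Set UI :=
  {y | ∃ φ : ℕ → ℕ, StrictMono φ ∧ Tendsto (fun n => f^[φ n] x) atTop (𝓝 y)}

/-- `p` is a periodic point of `f`. -/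
def IsPerPt (f : UI → UI) (p : UI) : Prop := ∃ n ≥ 1, f^[n] p = p

/-- A proper pair `⟨u,v⟩` is `f`-nonseparable: there is an infinite ω-limit set of `f`
containing `u` and `v` such that there is no periodic point of `f` strictly between them. -/
def FNonsep (f : UI → UI) (u v : UI) : Prop :=
  u ≠ v ∧ ∃ x : UI, (omegaSet f x).Infinite ∧ u ∈ omegaSet f x ∧ v ∈ omegaSet f x ∧
    ∀ p ∈ Set.Ioo (min u v) (max u v), ¬ IsPerPt f p

/-- The set of real limit points of the orbit of `x₀` under `F`. -/
def OmegaR (F : ℝ → ℝ) (x₀ : ℝ) : Set ℝ :=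
  {z | ∃ φ : ℕ → ℕ, StrictMono φ ∧ Tendsto (fun i => F^[φ i] x₀) atTop (𝓝 z)}

lemma exists_near {F : ℝ → ℝ} {x₀ c : ℝ} (h : c ∈ OmegaR F x₀)
    {ε : ℝ} (hε : 0 < ε) (N : ℕ) : ∃ n, N ≤ n ∧ |F^[n] x₀ - c| < ε := by
  obtain ⟨φ, hφ, ht⟩ := h
  obtain ⟨M, hM⟩ := (Metric.tendsto_atTop.mp ht) ε hε
  refine ⟨φ (max M N), le_trans (le_max_right M N) hφ.le_apply, ?_⟩
  simpa [Real.dist_eq] using hM (max M N) (le_max_left M N)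

/-- If a tail of the orbit along an arithmetic progression converges to `c`, then every
orbit limit point lies in the finite set `{F^[r] c : r < k}`, contradicting infiniteness. -/
lemma tail_lemma (F : ℝ → ℝ) (hF : Continuous F) (x₀ c : ℝ) (n k : ℕ) (hk : 1 ≤ k)
    (hy : Tendsto (fun j => F^[n + j * k] x₀) atTop (𝓝 c))
    (hinf : (OmegaR F x₀).Infinite) : False := by
  have hS : ((fun r => F^[r] c) '' Set.Iio k).Finite := (Set.finite_Iio k).image _
  apply hinf
  apply hS.subset
  rintro z ⟨φ, hφ, hz⟩
  by_contra hzS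
  have hzne : ∀ r, r < k → F^[r] c ≠ z := fun r hr he => hzS ⟨r, hr, he⟩
  -- minimum distance from z to the candidate set
  set T : Finset ℝ := (Finset.range k).image (fun r => |z - F^[r] c|) with hT
  have hTne : T.Nonempty := ⟨|z - F^[0] c|, Finset.mem_image_of_mem _ (Finset.mem_range.mpr hk)⟩
  set d : ℝ := T.min' hTne with hd
  have hdpos : 0 < d := by
    obtain ⟨w, hw, hwe⟩ := Finset.mem_image.mp (T.min'_mem hTne)
    rw [hd.symm] at hwe
    rw [← hwe]
    exact abs_pos.mpr (sub_ne_zero.mpr ((hzne w (Finset.mem_range.mp hw)).symm))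
  have hdle : ∀ r, r < k → d ≤ |z - F^[r] c| := by
    intro r hr
    exact T.min'_le _ (Finset.mem_image_of_mem _ (Finset.mem_range.mpr hr))
  -- uniform modulus of continuity at c for the finitely many iterates
  have hδex : ∀ r : ℕ, ∃ δ, 0 < δ ∧ ∀ y : ℝ, |y - c| < δ → |F^[r] y - F^[r] c| < d / 2 := by
    intro r
    obtain ⟨δ, hδ0, hδ⟩ := Metric.continuousAt_iff.mp (hF.iterate r).continuousAt (d / 2)
      (by linarith)
    exact ⟨δ, hδ0, fun y hy => by
      simpa [Real.dist_eq] using hδ (by simpa [Real.dist_eq] using hy)⟩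
  choose δf hδpos hδ using hδex
  set D : Finset ℝ := (Finset.range k).image δf with hD
  have hDne : D.Nonempty := ⟨δf 0, Finset.mem_image_of_mem _ (Finset.mem_range.mpr hk)⟩
  set δ : ℝ := D.min' hDne with hδdef
  have hδ0 : 0 < δ := by
    obtain ⟨w, hw, hwe⟩ := Finset.mem_image.mp (D.min'_mem hDne)
    rw [hδdef.symm] at hwe
    rw [← hwe]; exact hδpos w
  have hδle : ∀ r, r < k → δ ≤ δf r := fun r hr =>
    D.min'_le _ (Finset.mem_image_of_mem _ (Finset.mem_range.mpr hr))
  -- pick J with the progression within δ of c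
  obtain ⟨J, hJ⟩ := (Metric.tendsto_atTop.mp hy) δ hδ0
  -- pick a large orbit time close to z
  obtain ⟨M, hM⟩ := (Metric.tendsto_atTop.mp hz) (d / 2) (by linarith)
  set i := max M (n + J * k + k) with hi
  have him : n + J * k + k ≤ φ i := le_trans (le_max_right _ _) hφ.le_apply
  have hiz : |F^[φ i] x₀ - z| < d / 2 := by
    simpa [Real.dist_eq] using hM i (le_max_left _ _)
  -- decompose φ i = r + (n + j * k) with r < k and J ≤ j
  obtain ⟨j, r, hrk, hmeq, hjJ⟩ :
      ∃ j r, r < k ∧ φ i = r + (n + j * k) ∧ J ≤ j := by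
    set q := φ i - (n + J * k) with hqdef
    have hqk : k ≤ q := by omega
    have hdm := Nat.div_add_mod q k
    have hmul : (J + q / k) * k = J * k + k * (q / k) := by
      rw [Nat.add_mul, Nat.mul_comm (q / k) k]
    refine ⟨J + q / k, q % k, Nat.mod_lt _ (by omega), by omega, Nat.le_add_right _ _⟩
  have horb : F^[φ i] x₀ = F^[r] (F^[n + j * k] x₀) := by
    rw [hmeq, Function.iterate_add_apply]
  have h1 : |F^[n + j * k] x₀ - c| < δ := by
    simpa [Real.dist_eq] using hJ j hjJ
  have h2 : |F^[r] (F^[n + j * k] x₀) - F^[r] c| < d / 2 :=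
    hδ r _ (lt_of_lt_of_le h1 (hδle r hrk))
  have h3 : |z - F^[r] c| ≤ |z - F^[r] (F^[n + j * k] x₀)|
      + |F^[r] (F^[n + j * k] x₀) - F^[r] c| := abs_sub_le _ _ _
  have h4 : |z - F^[r] (F^[n + j * k] x₀)| < d / 2 := by
    rw [← horb, abs_sub_comm]
    exact hiz
  have h5 := hdle r hrk
  linarith [h2, h3, h4, h5]

/-- Core real-line lemma: if the orbit of `x₀` is bounded below by `c`, `c` is a limit point
of the orbit, the set of limit points is infinite, and `f` has no periodic point in `(c,v)`,
we get a contradiction. -/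
lemma core (F : ℝ → ℝ) (hF : Continuous F) (x₀ c v : ℝ) (hcv : c < v)
    (hlb : ∀ n, c ≤ F^[n] x₀)
    (hcω : c ∈ OmegaR F x₀)
    (hinf : (OmegaR F x₀).Infinite)
    (hnp : ∀ t, c < t → t < v → ∀ k, 1 ≤ k → F^[k] t ≠ t) : False := by
  -- the orbit hits c at most once
  have hit : ∀ n m : ℕ, n < m → F^[n] x₀ = c → F^[m] x₀ = c → False := by
    intro n m hnm h1 h2
    apply tail_lemma F hF x₀ c n (m - n) (by omega) _ hinf
    have base : ∀ j : ℕ, F^[n + j * (m - n)] x₀ = c := by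
      intro j
      induction j with
      | zero => simpa using h1
      | succ j ih =>
        have he : n + (j + 1) * (m - n) = (m - n) + (n + j * (m - n)) := by ring
        rw [he, Function.iterate_add_apply, ih]
        have he2 : (m - n) + n = m := by omega
        calc F^[m - n] c = F^[m - n] (F^[n] x₀) := by rw [h1]
          _ = F^[(m - n) + n] x₀ := (Function.iterate_add_apply F _ _ _).symm
          _ = c := by rw [he2]; exact h2
    simp only [base]
    exact tendsto_const_nhds
  have hone : ∃ N₀ : ℕ, ∀ n, N₀ ≤ n → F^[n] x₀ ≠ c := by
    by_cases h : ∃ n, F^[n] x₀ = c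
    · obtain ⟨n₀, hn₀⟩ := h
      exact ⟨n₀ + 1, fun n hn he => hit n₀ n (by omega) hn₀ he⟩
    · push_neg at h
      exact ⟨0, fun n _ => h n⟩
  -- Step 1 : there exist k ≥ 1 and b ∈ (c,v) with F^[k] b < b
  have step1 : ∃ k, 1 ≤ k ∧ ∃ b, c < b ∧ b < v ∧ F^[k] b < b := by
    by_contra hcon
    push_neg at hcon
    obtain ⟨N₀, hN₀⟩ := hone
    obtain ⟨n, hn, hnear⟩ := exists_near hcω (show (0:ℝ) < v - c by linarith) N₀
    set t₀ := F^[n] x₀ with ht₀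
    have h1 : c < t₀ := lt_of_le_of_ne (hlb n) (Ne.symm (hN₀ n hn))
    have h2 : t₀ < v := by
      have := (abs_lt.mp hnear).2
      linarith
    obtain ⟨m, hm, hmnear⟩ := exists_near hcω (show (0:ℝ) < t₀ - c by linarith) (n + 1)
    have h3 : F^[m] x₀ < t₀ := by
      have := (abs_lt.mp hmnear).2
      linarith
    have h4 : F^[m] x₀ = F^[m - n] t₀ := by
      rw [ht₀, ← Function.iterate_add_apply]
      congr 1
      omega
    rw [h4] at h3
    exact absurd h3 (not_lt.mpr (hcon (m - n) (by omega) t₀ h1 h2))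
  obtain ⟨k, hk1, b, hb1, hb2, hbneg⟩ := step1
  -- Step 2 : F^[k] < id on all of (c,v)
  have sign : ∀ t, c < t → t < v → F^[k] t < t := by
    intro s hs1 hs2
    by_contra hge
    push_neg at hge
    have hgt : s < F^[k] s := lt_of_le_of_ne hge (Ne.symm (hnp s hs1 hs2 k hk1))
    have hcont : ContinuousOn (fun t => F^[k] t - t) (Set.uIcc b s) :=
      ((hF.iterate k).sub continuous_id).continuousOn
    have h0mem : (0:ℝ) ∈ Set.uIcc (F^[k] b - b) (F^[k] s - s) := by
      rw [Set.mem_uIcc]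
      left
      constructor <;> linarith
    obtain ⟨t, ht, ht0⟩ := intermediate_value_uIcc hcont h0mem
    have htm : t ∈ Set.Ioo c v :=
      Set.ordConnected_Ioo.uIcc_subset (Set.mem_Ioo.mpr ⟨hb1, hb2⟩)
        (Set.mem_Ioo.mpr ⟨hs1, hs2⟩) ht
    exact hnp t htm.1 htm.2 k hk1 (by linarith [ht0, sub_eq_zero.mp ht0])
  -- Step 2.5 : F^[k] c ≤ c
  have hgc : F^[k] c ≤ c := by
    by_contra hgt
    push_neg at hgt
    have hcont : ContinuousAt (fun t => F^[k] t - t) c :=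
      ((hF.iterate k).sub continuous_id).continuousAt
    have hev : ∀ᶠ t in 𝓝 c, 0 < F^[k] t - t :=
      hcont.eventually (eventually_gt_nhds (show (0:ℝ) < F^[k] c - c by linarith))
    have h2 : Set.Ioo c v ∈ 𝓝[>] c := Ioo_mem_nhdsGT_of_mem ⟨le_refl c, hcv⟩
    have h3 : ∀ᶠ t in 𝓝[>] c, 0 < F^[k] t - t := hev.filter_mono nhdsWithin_le_nhds
    obtain ⟨t, hφt, ht⟩ := (h3.and (eventually_of_mem h2 (fun t ht => ht))).exists
    have := sign t ht.1 ht.2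
    linarith
  -- Step 3 : trap the orbit below (c+v)/2
  set δ₀ : ℝ := (c + v) / 2 with hδ₀
  obtain ⟨n, -, hnear⟩ := exists_near hcω (show (0:ℝ) < (v - c)/2 by linarith) 0
  set y : ℕ → ℝ := fun j => F^[n + j * k] x₀ with hydef
  have hy0 : y 0 < δ₀ := by
    have := (abs_lt.mp hnear).2
    simp only [hydef, Nat.zero_mul, Nat.add_zero]
    rw [hδ₀]
    linarith
  have ysucc : ∀ j, y (j + 1) = F^[k] (y j) := by
    intro j
    simp only [hydef]
    rw [← Function.iterate_add_apply]
    congr 1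
    ring
  have ylb : ∀ j, c ≤ y j := fun j => hlb _
  have key : ∀ j, y j < δ₀ → y (j + 1) ≤ y j := by
    intro j h
    rw [ysucc j]
    rcases eq_or_lt_of_le (ylb j) with he | hlt
    · rw [← he]
      exact hgc
    · exact le_of_lt (sign (y j) hlt (by rw [hδ₀] at h; linarith))
  have ydelta : ∀ j, y j < δ₀ := by
    intro j
    induction j with
    | zero => exact hy0
    | succ j ih => exact lt_of_le_of_lt (key j ih) ih
  have hant : Antitone y := antitone_nat_of_succ_le (fun j => key j (ydelta j))
  have hbdd : BddBelow (Set.range y) := ⟨c, by rintro _ ⟨j, rfl⟩; exact ylb j⟩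
  have hconv : Tendsto y atTop (𝓝 (⨅ j, y j)) := tendsto_atTop_ciInf hant hbdd
  set L : ℝ := ⨅ j, y j with hL
  have hLc : c ≤ L := le_ciInf ylb
  have hLv : L < v := by
    have : L ≤ y 0 := ciInf_le hbdd 0
    rw [hδ₀] at hy0
    linarith
  have hfix : F^[k] L = L := by
    have h1 : Tendsto (fun j => y (j + 1)) atTop (𝓝 L) := hconv.comp (tendsto_add_atTop_nat 1)
    have h2 : Tendsto (fun j => F^[k] (y j)) atTop (𝓝 (F^[k] L)) :=
      ((hF.iterate k).tendsto L).comp hconv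
    have h3 : (fun j => y (j + 1)) = fun j => F^[k] (y j) := funext ysucc
    rw [h3] at h1
    exact tendsto_nhds_unique h2 h1
  have hLeq : L = c := by
    rcases eq_or_lt_of_le hLc with he | hlt
    · exact he.symm
    · exact absurd hfix (ne_of_lt (sign L hlt hLv))
  apply tail_lemma F hF x₀ c n k hk1 _ hinf
  rw [← hLeq]
  exact hconv

theorem stmt_7 (f : UI → UI) (hf : Continuous f)
    (h0 : Dynamics.coverEntropy f Set.univ = 0)
    (u v : UI) (huv : u < v) (hns : FNonsep f u v) :
    (0 : ℝ) < (u : ℝ) ∧ (v : ℝ) < 1 := by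
  obtain ⟨hne, x, hinf, huω, hvω, hnp⟩ := hns
  rw [min_eq_left huv.le, max_eq_right huv.le] at hnp
  -- real extension of f
  set F : ℝ → ℝ := fun t => ((f (Set.projIcc 0 1 zero_le_one t) : UI) : ℝ) with hFdef
  have hFc : Continuous F := continuous_subtype_val.comp (hf.comp continuous_projIcc)
  have horb : ∀ (z : UI) (n : ℕ), F^[n] (z : ℝ) = ((f^[n] z : UI) : ℝ) := by
    intro z n
    induction n generalizing z with
    | zero => rfl
    | succ n ih =>
      rw [Function.iterate_succ_apply, Function.iterate_succ_apply]
      have hFz : F (z : ℝ) = ((f z : UI) : ℝ) := by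
        simp only [hFdef]
        congr 1
        rw [Set.projIcc_of_mem zero_le_one z.2]
      rw [hFz]
      exact ih (f z)
  have homega : ∀ w : UI, w ∈ omegaSet f x → ((w : ℝ) ∈ OmegaR F (x : ℝ)) := by
    rintro w ⟨φ, hφ, ht⟩
    refine ⟨φ, hφ, ?_⟩
    have h2 := (continuous_subtype_val.tendsto w).comp ht
    simp only [Function.comp_def] at h2
    convert h2 using 2 with i
    exact horb x (φ i)
  have hΩ : (OmegaR F (x : ℝ)).Infinite := by
    have h1 : (Subtype.val '' omegaSet f x).Infinite :=
      hinf.image (Subtype.val_injective.injOn)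
    apply h1.mono
    rintro _ ⟨w, hw, rfl⟩
    exact homega w hw
  have hlb : ∀ n, 0 ≤ F^[n] (x : ℝ) := fun n => by rw [horb]; exact (f^[n] x).2.1
  have hub : ∀ n, F^[n] (x : ℝ) ≤ 1 := fun n => by rw [horb]; exact (f^[n] x).2.2
  have hperiodic : ∀ t : ℝ, (u : ℝ) < t → t < (v : ℝ) → ∀ k, 1 ≤ k → F^[k] t ≠ t := by
    intro t h1 h2 k hk he
    have htI : t ∈ Set.Icc (0:ℝ) 1 :=
      ⟨le_of_lt (lt_of_le_of_lt u.2.1 h1), le_of_lt (lt_of_lt_of_le h2 v.2.2)⟩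
    set z : UI := ⟨t, htI⟩ with hz
    have hfz : f^[k] z = z := by
      apply Subtype.val_injective
      rw [← horb z k]
      exact he
    apply hnp z _ ⟨k, hk, hfz⟩
    rw [Set.mem_Ioo]
    exact ⟨Subtype.coe_lt_coe.mp h1, Subtype.coe_lt_coe.mp h2⟩
  constructor
  · -- 0 < u
    by_contra h
    push_neg at h
    have hu0 : (u : ℝ) = 0 := le_antisymm h u.2.1
    apply core F hFc (x : ℝ) 0 (v : ℝ) (by rw [← hu0]; exact Subtype.coe_lt_coe.mpr huv)
      hlb (by rw [← hu0]; exact homega u huω) hΩ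
    intro t h1 h2 k hk
    exact hperiodic t (by rw [hu0]; exact h1) h2 k hk
  · -- v < 1
    by_contra h
    push_neg at h
    have hv1 : (v : ℝ) = 1 := le_antisymm v.2.2 h
    set G : ℝ → ℝ := fun t => -F (-t) with hGdef
    have hGc : Continuous G := (hFc.comp continuous_neg).neg
    have horb2 : ∀ (n : ℕ) (t : ℝ), G^[n] (-t) = -F^[n] t := by
      intro n
      induction n with
      | zero => intro t; simp
      | succ n ih =>
        intro t
        rw [Function.iterate_succ_apply, Function.iterate_succ_apply]
        have : G (-t) = -(F t) := by simp [hGdef]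
        rw [this, ih (F t)]
    have hΩG : (OmegaR G (-(x : ℝ))).Infinite := by
      have h1 : (Neg.neg '' OmegaR F (x : ℝ)).Infinite :=
        hΩ.image (neg_injective.injOn)
      apply h1.mono
      rintro _ ⟨z, ⟨φ, hφ, ht⟩, rfl⟩
      refine ⟨φ, hφ, ?_⟩
      have h2 := ht.neg
      convert h2 using 2 with i
      exact horb2 (φ i) (x : ℝ)
    apply core G hGc (-(x : ℝ)) (-1) (-(u : ℝ))
      (by have : (u : ℝ) < 1 := lt_of_lt_of_le (Subtype.coe_lt_coe.mpr huv) (by rw [hv1]);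
          linarith)
      (fun n => by rw [horb2]; have := hub n; linarith)
      (by
        obtain ⟨φ, hφ, ht⟩ := homega v hvω
        refine ⟨φ, hφ, ?_⟩
        have h2 := ht.neg
        rw [hv1] at h2
        convert h2 using 2 with i
        exact horb2 (φ i) (x : ℝ))
      hΩG
    intro t h1 h2 k hk he
    have hs : F^[k] (-t) = -t := by
      have : G^[k] (-(-t)) = -F^[k] (-t) := horb2 k (-t)
      rw [neg_neg] at this
      rw [this] at he
      linarith
    exact hperiodic (-t) (by linarith) (by rw [hv1]; linarith) k hk hs
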